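/- Let {H_j, I_{j,k}} be a countable inductive system of Hilbert spaces with inductive limit (H, I_j), and let D_j be densely defined self-adjoint operators on H_j compatible with the connecting isometries (i.e. I_{j,k}(Dom D_j) ⊆ Dom D_k and D_k(I_{j,k}ξ) = I_{j,k}(D_jξ) for ξ ∈ Dom D_j, j ≤ k). Then the operator D₀ on H with domain 𝒟 = ⋃_j I_j(Dom D_j), given by D₀(I_jξ) = I_j(D_jξ) for ξ ∈ Dom D_j, is well defined, densely defined, symmetric, and essentially self-adjoint: its closure is a self-adjoint operator. -/

import Mathlib

open scoped InnerProductSpace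

open scoped ComplexConjugate
open LinearPMap

set_option linter.unusedVariables false

noncomputable section
set_option linter.unusedSectionVars false

variable {E : Type*} [NormedAddCommGroup E] [InnerProductSpace ℂ E] [CompleteSpace E]

lemma aux_im_zero {T : E →ₗ.[ℂ] E}
    (hsym : ∀ x y : T.domain, ⟪T x, (y : E)⟫_ℂ = ⟪(x : E), T y⟫_ℂ) (x : T.domain) :
    (⟪T x, (x : E)⟫_ℂ).im = 0 := by
  have h1 : ⟪T x, (x : E)⟫_ℂ = conj (⟪T x, (x : E)⟫_ℂ) := by
    rw [inner_conj_symm]; exact hsym x x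
  exact Complex.conj_eq_iff_im.mp h1.symm

lemma aux_norm_sq {T : E →ₗ.[ℂ] E}
    (hsym : ∀ x y : T.domain, ⟪T x, (y : E)⟫_ℂ = ⟪(x : E), T y⟫_ℂ)
    {c : ℂ} (hc : c.re = 0) (hc1 : ‖c‖ = 1) (x : T.domain) :
    ‖T x + c • (x : E)‖ ^ 2 = ‖T x‖ ^ 2 + ‖(x : E)‖ ^ 2 := by
  have h := norm_add_sq (𝕜 := ℂ) (T x) (c • (x : E))
  have h3 : RCLike.re (⟪T x, c • (x : E)⟫_ℂ) = 0 := by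
    rw [inner_smul_right]
    simp only [RCLike.re_to_complex, Complex.mul_re, hc, aux_im_zero hsym x]
    ring
  rw [h, h3, norm_smul, hc1, one_mul]
  ring

/-- The range of `T + c` is closed for a closed symmetric operator and purely
imaginary unit `c`. -/
lemma aux_range_closed {T : E →ₗ.[ℂ] E} (hT : T.IsClosed)
    (hsym : ∀ x y : T.domain, ⟪T x, (y : E)⟫_ℂ = ⟪(x : E), T y⟫_ℂ)
    {c : ℂ} (hc : c.re = 0) (hc1 : ‖c‖ = 1) :
    IsClosed {y : E | ∃ x : T.domain, T x + c • (x : E) = y} := by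
  haveI : CompleteSpace T.graph := hT.completeSpace_coe
  set g : E × E →L[ℂ] E :=
    ContinuousLinearMap.snd ℂ E E + c • ContinuousLinearMap.fst ℂ E E with hg
  set f : T.graph → E := fun p => g p.val with hf
  have hgapp : ∀ p : E × E, g p = p.2 + c • p.1 := fun p => rfl
  have key : ∀ p : T.graph, ‖f p‖ ^ 2 = ‖p.val.2‖ ^ 2 + ‖p.val.1‖ ^ 2 := by
    intro ⟨p, hp⟩
    rw [LinearPMap.mem_graph_iff] at hp
    obtain ⟨x, hx1, hx2⟩ := hp
    simp only [hf, hgapp, ← hx1, ← hx2]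
    exact aux_norm_sq hsym hc hc1 x
  have key2 : ∀ s : T.graph, ‖(s : E × E)‖ ≤ ‖f s‖ := by
    intro s
    have hk := key s
    rw [Prod.norm_def]
    apply max_le <;>
      nlinarith [norm_nonneg (f s), norm_nonneg (s : E × E).1, norm_nonneg (s : E × E).2,
        sq_nonneg (‖f s‖ - ‖(s : E × E).1‖), sq_nonneg (‖f s‖ - ‖(s : E × E).2‖)]
  have hanti : AntilipschitzWith 1 f := by
    rw [antilipschitzWith_iff_le_mul_dist]
    intro p q
    have hsub : f p - f q = f (p - q) := by
      simp only [hf, AddSubgroupClass.coe_sub]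
      exact (_root_.map_sub g _ _).symm
    have h1 : dist (f p) (f q) = ‖f (p - q)‖ := by rw [dist_eq_norm, hsub]
    have h2 : dist p q = ‖((p - q : T.graph) : E × E)‖ := by
      rw [Subtype.dist_eq, dist_eq_norm, AddSubgroupClass.coe_sub]
    rw [h1, h2, NNReal.coe_one, one_mul]
    exact key2 (p - q)
  have hrange : Set.range f = {y : E | ∃ x : T.domain, T x + c • (x : E) = y} := by
    ext y
    constructor
    · rintro ⟨⟨p, hp⟩, rfl⟩
      rw [LinearPMap.mem_graph_iff] at hp
      obtain ⟨x, hx1, hx2⟩ := hp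
      exact ⟨x, by simp only [hf, hgapp, ← hx1, ← hx2]⟩
    · rintro ⟨x, rfl⟩
      exact ⟨⟨((x : E), T x), T.mem_graph x⟩, rfl⟩
  rw [← hrange]
  exact hanti.isClosed_range (g.uniformContinuous.comp uniformContinuous_subtype_val)

/-- The adjoint of a densely defined operator is closed. -/
lemma aux_adjoint_closed (T : E →ₗ.[ℂ] E) (hd : Dense (T.domain : Set E)) :
    T†.IsClosed := by
  have hset : (T†.graph : Set (E × E)) =
      ⋂ u : T.domain, {p : E × E | ⟪p.2, (u : E)⟫_ℂ = ⟪p.1, T u⟫_ℂ} := by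
    ext p
    simp only [SetLike.mem_coe, Set.mem_iInter, Set.mem_setOf_eq]
    constructor
    · intro hp u
      rw [LinearPMap.mem_graph_iff] at hp
      obtain ⟨y, hy1, hy2⟩ := hp
      rw [← hy1, ← hy2]
      exact adjoint_isFormalAdjoint hd y u
    · intro hp
      have hmem : p.1 ∈ T†.domain :=
        mem_adjoint_domain_of_exists _ ⟨p.2, fun u => hp u⟩
      have happ : T† ⟨p.1, hmem⟩ = p.2 :=
        adjoint_apply_eq hd _ (fun u => hp u)
      rw [LinearPMap.mem_graph_iff]
      exact ⟨⟨p.1, hmem⟩, rfl, happ⟩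
  show _root_.IsClosed (T†.graph : Set (E × E))
  rw [hset]
  refine isClosed_iInter fun u => isClosed_eq ?_ ?_
  · exact (continuous_snd.inner continuous_const : Continuous fun p : E × E => ⟪p.2, (u : E)⟫_ℂ)
  · exact (continuous_fst.inner continuous_const : Continuous fun p : E × E => ⟪p.1, T u⟫_ℂ)

/-- Vectors in the kernel of `T† + conj c` vanish when `T + c` has dense range. -/
lemma aux_ker_triv {T : E →ₗ.[ℂ] E} (hd : Dense (T.domain : Set E)) {c : ℂ}
    (hrange : Dense {y : E | ∃ u : T.domain, T u + c • (u : E) = y})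
    (v : T†.domain) (hv : T† v = (-(starRingEnd ℂ c)) • (v : E)) : (v : E) = 0 := by
  have horto : ∀ y : E, ⟪(v : E), y⟫_ℂ = 0 := by
    have heq : (fun y : E => ⟪(v : E), y⟫_ℂ) = fun _ => (0 : ℂ) := by
      refine Continuous.ext_on hrange ?_ continuous_const ?_
      · exact continuous_const.inner continuous_id
      · rintro y ⟨u, rfl⟩
        show ⟪(v : E), T u + c • (u : E)⟫_ℂ = 0
        have h1 : ⟪(v : E), T u⟫_ℂ = ⟪T† v, (u : E)⟫_ℂ :=
          (adjoint_isFormalAdjoint hd v u).symm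
        rw [inner_add_right, inner_smul_right, h1, hv, inner_smul_left]
        simp only [_root_.map_neg, Complex.conj_conj, neg_smul]
        ring
    exact fun y => congrFun heq y
  have := horto (v : E)
  rwa [inner_self_eq_zero] at this

/-- A self-adjoint operator `D` satisfies: `D + c` is surjective for `c = ±i`. -/
lemma aux_sa_surj {D : E →ₗ.[ℂ] E} (hsa : IsSelfAdjoint D) {c : ℂ}
    (hc : c.re = 0) (hc1 : ‖c‖ = 1) (y : E) :
    ∃ u : D.domain, D u + c • (u : E) = y := by
  have hd : Dense (D.domain : Set E) := hsa.dense_domain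
  have hsa' : D† = D := hsa
  have hsym : ∀ x y : D.domain, ⟪D x, (y : E)⟫_ℂ = ⟪(x : E), D y⟫_ℂ := by
    have h := adjoint_isFormalAdjoint hd
    rw [hsa'] at h
    exact h
  have hclosed : D.IsClosed := by
    have := aux_adjoint_closed D hd
    rwa [hsa'] at this
  -- The range of `D + c` as a submodule
  set L : D.domain →ₗ[ℂ] E := D.toFun + c • D.domain.subtype with hL
  have hLapp : ∀ u : D.domain, L u = D u + c • (u : E) := fun u => rfl
  have hKset : (LinearMap.range L : Set E) = {y : E | ∃ x : D.domain, D x + c • (x : E) = y} := by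
    ext z
    simp only [SetLike.mem_coe, LinearMap.mem_range, Set.mem_setOf_eq]
    exact ⟨fun ⟨u, hu⟩ => ⟨u, by rw [← hLapp]; exact hu⟩, fun ⟨u, hu⟩ => ⟨u, by rw [hLapp]; exact hu⟩⟩
  have hKclosed : _root_.IsClosed (LinearMap.range L : Set E) := by
    rw [hKset]; exact aux_range_closed hclosed hsym hc hc1
  haveI : CompleteSpace (LinearMap.range L) := hKclosed.completeSpace_coe
  have hbot : (LinearMap.range L)ᗮ = ⊥ := by
    rw [Submodule.eq_bot_iff]
    intro v hvmem
    have hvo : ∀ u : D.domain, ⟪v, D u + c • (u : E)⟫_ℂ = 0 := by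
      intro u
      have h0 : ⟪(L u : E), v⟫_ℂ = 0 :=
        (Submodule.mem_orthogonal _ v).mp hvmem _ (LinearMap.mem_range_self L u)
      rw [hLapp] at h0
      rw [← inner_conj_symm, h0, _root_.map_zero]
    -- `v` is an eigenvector of `D` with purely imaginary eigenvalue, hence zero
    have hw : ∀ x : D.domain, ⟪(-(starRingEnd ℂ c)) • v, (x : E)⟫_ℂ = ⟪v, D x⟫_ℂ := by
      intro x
      have h1 := hvo x
      rw [inner_add_right, inner_smul_right] at h1
      rw [inner_smul_left]
      simp only [_root_.map_neg, Complex.conj_conj]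
      linear_combination -h1
    have hvdom : v ∈ D†.domain := mem_adjoint_domain_of_exists _ ⟨_, hw⟩
    have happ : D† ⟨v, hvdom⟩ = (-(starRingEnd ℂ c)) • v := adjoint_apply_eq hd _ hw
    have hgraph : (v, (-(starRingEnd ℂ c)) • v) ∈ D.graph := by
      rw [← hsa', LinearPMap.mem_graph_iff]
      exact ⟨⟨v, hvdom⟩, rfl, happ⟩
    rw [LinearPMap.mem_graph_iff] at hgraph
    obtain ⟨x, hx1, hx2⟩ := hgraph
    have him := aux_im_zero hsym x
    have h2 : ⟪D x, (x : E)⟫_ℂ = -c * ((‖v‖ : ℂ)) ^ 2 := by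
      rw [hx2, hx1]
      show ⟪-(starRingEnd ℂ) c • v, v⟫_ℂ = _
      rw [inner_smul_left, inner_self_eq_norm_sq_to_K]
      simp only [_root_.map_neg, Complex.conj_conj]
      norm_cast
    rw [h2] at him
    have him' : c.im * ‖v‖ ^ 2 = 0 := by
      have : (-c * ((‖v‖ : ℂ)) ^ 2).im = -(c.im * ‖v‖ ^ 2) := by
        have hre : (((‖v‖ : ℂ)) ^ 2).re = ‖v‖ ^ 2 := by
          rw [← Complex.ofReal_pow]; exact Complex.ofReal_re _
        have him0 : (((‖v‖ : ℂ)) ^ 2).im = 0 := by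
          rw [← Complex.ofReal_pow]; exact Complex.ofReal_im _
        rw [Complex.mul_im, Complex.neg_re, Complex.neg_im, hre, him0]
        ring
      rw [this] at him
      linarith
    have him2 : c.im ^ 2 = 1 := by
      have h3 : ‖c‖ = 1 := hc1
      have h4 := Complex.sq_norm c
      rw [h3, Complex.normSq_apply, hc] at h4
      nlinarith
    rcases mul_eq_zero.mp him' with h | h
    · exfalso; rw [h] at him2; simp at him2
    · have : ‖v‖ = 0 := by nlinarith [norm_nonneg v]
      exact norm_eq_zero.mp this
  have htop : LinearMap.range L = ⊤ := (Submodule.orthogonal_eq_bot_iff).mp hbot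
  have : y ∈ LinearMap.range L := htop ▸ Submodule.mem_top
  obtain ⟨u, hu⟩ := this
  exact ⟨u, by rw [← hLapp]; exact hu⟩

/-- The closure of a symmetric operator is symmetric. -/
lemma aux_closure_symm {T : E →ₗ.[ℂ] E} (hT : T.IsClosable)
    (hsym : ∀ x y : T.domain, ⟪T x, (y : E)⟫_ℂ = ⟪(x : E), T y⟫_ℂ) :
    ∀ x y : T.closure.domain, ⟪T.closure x, (y : E)⟫_ℂ = ⟪(x : E), T.closure y⟫_ℂ := by
  have hgr : (T.closure.graph : Set (E × E)) = closure (T.graph : Set (E × E)) := by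
    rw [← hT.graph_closure_eq_closure_graph]
    exact (Submodule.topologicalClosure_coe _).symm
  have step1 : ∀ p ∈ T.graph, ∀ q ∈ closure (T.graph : Set (E × E)),
      ⟪p.2, q.1⟫_ℂ = ⟪p.1, q.2⟫_ℂ := by
    intro p hp
    have hcl : _root_.IsClosed {q : E × E | ⟪p.2, q.1⟫_ℂ = ⟪p.1, q.2⟫_ℂ} :=
      isClosed_eq (continuous_const.inner continuous_fst)
        (continuous_const.inner continuous_snd)
    intro q hq
    refine hcl.closure_subset_iff.mpr ?_ hq
    intro r hr
    rw [SetLike.mem_coe, LinearPMap.mem_graph_iff] at hr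
    obtain ⟨y, hy1, hy2⟩ := hr
    rw [LinearPMap.mem_graph_iff] at hp
    obtain ⟨x, hx1, hx2⟩ := hp
    show ⟪p.2, r.1⟫_ℂ = ⟪p.1, r.2⟫_ℂ
    rw [← hy1, ← hy2, ← hx1, ← hx2]
    exact hsym x y
  have step2 : ∀ q ∈ closure (T.graph : Set (E × E)), ∀ p ∈ closure (T.graph : Set (E × E)),
      ⟪p.2, q.1⟫_ℂ = ⟪p.1, q.2⟫_ℂ := by
    intro q hq
    have hcl : _root_.IsClosed {p : E × E | ⟪p.2, q.1⟫_ℂ = ⟪p.1, q.2⟫_ℂ} :=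
      isClosed_eq ((continuous_snd.inner continuous_const))
        ((continuous_fst.inner continuous_const))
    intro p hp
    refine hcl.closure_subset_iff.mpr ?_ hp
    intro r hr
    exact step1 r hr q hq
  intro x y
  have hx : ((x : E), T.closure x) ∈ closure (T.graph : Set (E × E)) := by
    rw [← hgr]; exact T.closure.mem_graph x
  have hy : ((y : E), T.closure y) ∈ closure (T.graph : Set (E × E)) := by
    rw [← hgr]; exact T.closure.mem_graph y
  exact step2 ((y : E), T.closure y) hy ((x : E), T.closure x) hx

/-- A densely defined symmetric operator is contained in its adjoint. -/
lemma aux_le_adj {S : E →ₗ.[ℂ] E} (hdS : Dense (S.domain : Set E))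
    (hSsym : ∀ x y : S.domain, ⟪S x, (y : E)⟫_ℂ = ⟪(x : E), S y⟫_ℂ) : S ≤ S† :=
  LinearPMap.IsFormalAdjoint.le_adjoint hdS (fun x y => hSsym x y)

/-- Essential self-adjointness criterion: a densely defined symmetric closable operator whose
ranges of `T ± i` are dense has self-adjoint closure. -/
lemma aux_esa {T : E →ₗ.[ℂ] E} (hd : Dense (T.domain : Set E))
    (hsym : ∀ x y : T.domain, ⟪T x, (y : E)⟫_ℂ = ⟪(x : E), T y⟫_ℂ)
    (hclosable : T.IsClosable)
    (hr1 : Dense {y : E | ∃ u : T.domain, T u + Complex.I • (u : E) = y})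
    (hr2 : Dense {y : E | ∃ u : T.domain, T u + (-Complex.I) • (u : E) = y}) :
    IsSelfAdjoint T.closure := by
  set S := T.closure with hS
  have hle : T ≤ S := T.le_closure
  have hdS : Dense (S.domain : Set E) := hd.mono (SetLike.coe_subset_coe.mpr hle.1)
  have hSclosed : S.IsClosed := hclosable.closure_isClosed
  have hSsym : ∀ x y : S.domain, ⟪S x, (y : E)⟫_ℂ = ⟪(x : E), S y⟫_ℂ :=
    aux_closure_symm hclosable hsym
  -- ranges of S ± i contain ranges of T ± i
  have hsub : ∀ c : ℂ, {y : E | ∃ u : T.domain, T u + c • (u : E) = y} ⊆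
      {y : E | ∃ u : S.domain, S u + c • (u : E) = y} := by
    rintro c y ⟨u, rfl⟩
    refine ⟨⟨(u : E), hle.1 u.2⟩, ?_⟩
    congr 1
    exact (hle.2 rfl).symm
  have hsurj : ∀ (c : ℂ), c.re = 0 → ‖c‖ = 1 →
      Dense {y : E | ∃ u : T.domain, T u + c • (u : E) = y} →
      ∀ y : E, ∃ u : S.domain, S u + c • (u : E) = y := by
    intro c hc hc1 hdense y
    have hden : Dense {y : E | ∃ u : S.domain, S u + c • (u : E) = y} :=
      hdense.mono (hsub c)
    have hclosed := aux_range_closed hSclosed hSsym hc hc1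
    have : {y : E | ∃ u : S.domain, S u + c • (u : E) = y} = Set.univ := by
      rw [← hclosed.closure_eq, hden.closure_eq]
    exact (this ▸ Set.mem_univ y : y ∈ _)
  have hIre : (Complex.I).re = 0 := Complex.I_re
  have hIn : ‖Complex.I‖ = 1 := by simp
  have hnIre : (-Complex.I).re = 0 := by simp
  have hnIn : ‖-Complex.I‖ = 1 := by simp
  have hsurjI := hsurj Complex.I hIre hIn hr1
  have hr2' : Dense {y : E | ∃ u : S.domain, S u + (-Complex.I) • (u : E) = y} :=
    hr2.mono (hsub (-Complex.I))
  -- key claim : every element of the domain of S† is in the domain of S with equal value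
  have key : ∀ v : S†.domain, ∃ u : S.domain, ((u : E) = (v : E)) ∧ S† v = S u := by
    intro v
    obtain ⟨u, hu⟩ := hsurjI (S† v + Complex.I • (v : E))
    -- z := v - u is in ker (S† + i)
    have huS : (u : E) ∈ S†.domain := (aux_le_adj hdS hSsym).1 u.2
    have hz : ((v : E) - (u : E)) ∈ S†.domain := S†.domain.sub_mem v.2 huS
    have hval : S† ⟨(v : E) - (u : E), hz⟩ = S† v - S u := by
      have h1 : S† ⟨(v : E) - (u : E), hz⟩ = S† v - S† ⟨(u : E), huS⟩ := by
        have : (⟨(v : E) - (u : E), hz⟩ : S†.domain) = v - ⟨(u : E), huS⟩ := rfl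
        rw [this, LinearPMap.map_sub]
      rw [h1]
      congr 1
      exact ((aux_le_adj hdS hSsym).2 (rfl : ((u : S.domain) : E) = _)).symm
    have hzval : S† ⟨(v : E) - (u : E), hz⟩ = (-(starRingEnd ℂ (-Complex.I))) • ((v : E) - (u : E)) := by
      rw [hval]
      have h2 : S u = S† v + Complex.I • (v : E) - Complex.I • (u : E) := by
        rw [← hu]; module
      rw [h2]
      simp only [_root_.map_neg, Complex.conj_I, neg_neg]
      module
    have hz0 : (v : E) - (u : E) = 0 :=
      aux_ker_triv hdS hr2' ⟨(v : E) - (u : E), hz⟩ hzval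
    have hu1 : (u : E) = (v : E) := by
      have := sub_eq_zero.mp hz0; exact this.symm
    refine ⟨u, hu1, ?_⟩
    have hz' : (⟨(v : E) - (u : E), hz⟩ : S†.domain) = 0 := Subtype.ext hz0
    have := hval
    rw [hz', LinearPMap.map_zero] at this
    have h3 := this.symm
    rw [sub_eq_zero] at h3
    exact h3
  rw [LinearPMap.isSelfAdjoint_def]
  have h1 : S† ≤ S := by
    constructor
    case left =>
      intro x hx
      obtain ⟨u, hu1, hu2⟩ := key ⟨x, hx⟩
      have : (u : E) = x := hu1
      exact this ▸ u.2
    case right =>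
      intro x y hxy
      obtain ⟨u, hu1, hu2⟩ := key x
      rw [hu2]
      have huy : u = y := Subtype.ext (hu1.trans hxy)
      rw [huy]
  exact LinearPMap.eq_of_le_of_domain_eq h1
    (le_antisymm h1.1 (aux_le_adj hdS hSsym).1)

/-- `T` closable if densely defined and symmetric. -/
lemma aux_closable {T : E →ₗ.[ℂ] E} (hd : Dense (T.domain : Set E))
    (hsym : ∀ x y : T.domain, ⟪T x, (y : E)⟫_ℂ = ⟪(x : E), T y⟫_ℂ) : T.IsClosable :=
  ((aux_adjoint_closed T hd).isClosable).leIsClosable (aux_le_adj hd hsym)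

/-- A self-adjoint operator is symmetric. -/
lemma aux_sa_symm {D : E →ₗ.[ℂ] E} (hsa : IsSelfAdjoint D) :
    ∀ x y : D.domain, ⟪D x, (y : E)⟫_ℂ = ⟪(x : E), D y⟫_ℂ := by
  have hsa' : D† = D := hsa
  have h := adjoint_isFormalAdjoint (hsa.dense_domain)
  rw [hsa'] at h
  exact h

/-- Graph version of symmetry. -/
lemma aux_graph_symm {D : E →ₗ.[ℂ] E}
    (hsym : ∀ x y : D.domain, ⟪D x, (y : E)⟫_ℂ = ⟪(x : E), D y⟫_ℂ) :
    ∀ p ∈ D.graph, ∀ q ∈ D.graph, ⟪p.2, q.1⟫_ℂ = ⟪p.1, q.2⟫_ℂ := by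
  intro p hp q hq
  rw [LinearPMap.mem_graph_iff] at hp hq
  obtain ⟨x, hx1, hx2⟩ := hp
  obtain ⟨y, hy1, hy2⟩ := hq
  rw [← hx1, ← hx2, ← hy1, ← hy2]
  exact hsym x y

end


/-- The inductive limit operator `D₀` of a countable inductive system of
densely defined self-adjoint operators is well defined (it exists as a `LinearPMap` with
domain `⋃ j, I_j (Dom D_j)` acting by `D₀ (I_j ξ) = I_j (D_j ξ)`), densely defined,
symmetric and essentially self-adjoint: its closure is self-adjoint. -/
theorem stmt0
    (H : ℕ → Type*) [∀ j, NormedAddCommGroup (H j)] [∀ j, InnerProductSpace ℂ (H j)]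
    [∀ j, CompleteSpace (H j)]
    (Hlim : Type*) [NormedAddCommGroup Hlim] [InnerProductSpace ℂ Hlim] [CompleteSpace Hlim]
    (I : ∀ j k : ℕ, j ≤ k → H j →ₗᵢ[ℂ] H k) (J : ∀ j : ℕ, H j →ₗᵢ[ℂ] Hlim)
    (hI : ∀ (j k l : ℕ) (hjk : j ≤ k) (hkl : k ≤ l) (ξ : H j),
      I k l hkl (I j k hjk ξ) = I j l (hjk.trans hkl) ξ)
    (hJ : ∀ (j k : ℕ) (hjk : j ≤ k) (ξ : H j), J k (I j k hjk ξ) = J j ξ)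
    (hdense : Dense (⋃ j, Set.range (J j)))
    (D : ∀ j, H j →ₗ.[ℂ] H j)
    (hDdense : ∀ j, Dense ((D j).domain : Set (H j)))
    (hDsa : ∀ j, IsSelfAdjoint (D j))
    (hDcompat : ∀ (j k : ℕ) (hjk : j ≤ k) (ξ : (D j).domain),
      ∃ h : I j k hjk ξ ∈ (D k).domain, (D k) ⟨I j k hjk ξ, h⟩ = I j k hjk ((D j) ξ)) :
    ∃ D₀ : Hlim →ₗ.[ℂ] Hlim,
      (D₀.domain : Set Hlim) = ⋃ j, (J j) '' ((D j).domain : Set (H j)) ∧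
      (∀ (j : ℕ) (ξ : (D j).domain) (h : J j ξ ∈ D₀.domain), D₀ ⟨J j ξ, h⟩ = J j ((D j) ξ)) ∧
      Dense (D₀.domain : Set Hlim) ∧
      (∀ x y : D₀.domain, ⟪D₀ x, (y : Hlim)⟫_ℂ = ⟪(x : Hlim), D₀ y⟫_ℂ) ∧
      D₀.IsClosable ∧ IsSelfAdjoint D₀.closure := by
    classical
  -- the graph of the limit operator
  set Gj : ℕ → Submodule ℂ (Hlim × Hlim) := fun j =>
    (D j).graph.map (((J j).toLinearMap).prodMap ((J j).toLinearMap)) with hGj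
  have hGj_mem : ∀ (j : ℕ) (x : Hlim × Hlim), x ∈ Gj j ↔
      ∃ p ∈ (D j).graph, (J j p.1, J j p.2) = x := by
    intro j x
    constructor
    · rintro ⟨p, hp, rfl⟩; exact ⟨p, hp, rfl⟩
    · rintro ⟨p, hp, rfl⟩; exact Submodule.mem_map.mpr ⟨p, hp, rfl⟩
  have hmono : Monotone Gj := by
    intro j k hjk x hx
    rw [hGj_mem] at hx ⊢
    obtain ⟨p, hp, rfl⟩ := hx
    rw [LinearPMap.mem_graph_iff] at hp
    obtain ⟨ξ, hξ1, hξ2⟩ := hp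
    obtain ⟨hmem, heq⟩ := hDcompat j k hjk ξ
    refine ⟨(I j k hjk (ξ : H j), I j k hjk ((D j) ξ)), ?_, ?_⟩
    · rw [LinearPMap.mem_graph_iff]
      exact ⟨⟨I j k hjk (ξ : H j), hmem⟩, rfl, heq⟩
    · simp only [hJ j k hjk, ← hξ1, ← hξ2]
  set G : Submodule ℂ (Hlim × Hlim) := ⨆ j, Gj j with hG
  have hmemG : ∀ x : Hlim × Hlim, x ∈ G ↔ ∃ j, x ∈ Gj j := fun x =>
    Submodule.mem_iSup_of_directed Gj hmono.directed_le
  have hg : ∀ x : Hlim × Hlim, x ∈ G → x.1 = 0 → x.2 = 0 := by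
    intro x hx hx1
    obtain ⟨j, hj⟩ := (hmemG x).mp hx
    rw [hGj_mem] at hj
    obtain ⟨p, hp, rfl⟩ := hj
    rw [LinearPMap.mem_graph_iff] at hp
    obtain ⟨ξ, hξ1, hξ2⟩ := hp
    simp only at hx1 ⊢
    have hξ0 : (ξ : H j) = 0 := by
      apply (J j).injective
      rw [hξ1, hx1]
      simp
    have : ξ = 0 := Subtype.ext hξ0
    rw [← hξ2, this, LinearPMap.map_zero]
    simp
  set D₀ : Hlim →ₗ.[ℂ] Hlim := G.toLinearPMap with hD₀
  have hgraph : D₀.graph = G := G.toLinearPMap_graph_eq hg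
  -- membership in the graph
  have hmem_graph : ∀ (j : ℕ) (ξ : (D j).domain),
      (J j (ξ : H j), J j ((D j) ξ)) ∈ D₀.graph := by
    intro j ξ
    rw [hgraph]
    refine (hmemG _).mpr ⟨j, ?_⟩
    rw [hGj_mem]
    exact ⟨((ξ : H j), (D j) ξ), (D j).mem_graph ξ, rfl⟩
  -- the domain is the union
  have hdom : (D₀.domain : Set Hlim) = ⋃ j, (J j) '' ((D j).domain : Set (H j)) := by
    ext x
    simp only [Set.mem_iUnion, Set.mem_image, SetLike.mem_coe]
    constructor
    · intro hx
      obtain ⟨p, hp, hpx⟩ := Submodule.mem_map.mp hx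
      obtain ⟨j, hj⟩ := (hmemG p).mp hp
      rw [hGj_mem] at hj
      obtain ⟨q, hq, rfl⟩ := hj
      rw [LinearPMap.mem_graph_iff] at hq
      obtain ⟨ξ, hξ1, hξ2⟩ := hq
      exact ⟨j, (ξ : H j), ξ.2, by rw [hξ1]; exact hpx⟩
    · rintro ⟨j, ξ, hξ, rfl⟩
      exact Submodule.mem_map.mpr ⟨(J j ξ, J j ((D j) ⟨ξ, hξ⟩)),
        hgraph ▸ hmem_graph j ⟨ξ, hξ⟩, rfl⟩
  -- the action
  have haction : ∀ (j : ℕ) (ξ : (D j).domain) (h : J j ξ ∈ D₀.domain),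
      D₀ ⟨J j ξ, h⟩ = J j ((D j) ξ) := by
    intro j ξ h
    have hm := hmem_graph j ξ
    rw [LinearPMap.mem_graph_iff] at hm
    obtain ⟨y, hy1, hy2⟩ := hm
    have : y = ⟨J j ξ, h⟩ := Subtype.ext hy1
    rw [← this, hy2]
  -- density of the domain
  have hdomdense : Dense (D₀.domain : Set Hlim) := by
    have hsub : (⋃ j, Set.range (J j)) ⊆ closure (D₀.domain : Set Hlim) := by
      rintro x hx
      rw [Set.mem_iUnion] at hx
      obtain ⟨j, ξ, rfl⟩ := hx
      have h1 : ξ ∈ closure ((D j).domain : Set (H j)) := (hDdense j) ξ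
      have h2 : J j ξ ∈ (J j) '' closure ((D j).domain : Set (H j)) := ⟨ξ, h1, rfl⟩
      have h3 : (J j) '' closure ((D j).domain : Set (H j)) ⊆
          closure ((J j) '' ((D j).domain : Set (H j))) :=
        image_closure_subset_closure_image (J j).continuous
      refine closure_mono ?_ (h3 h2)
      rw [hdom]
      exact Set.subset_iUnion (fun j => (J j) '' ((D j).domain : Set (H j))) j
    rw [dense_iff_closure_eq] at hdense ⊢
    apply Set.eq_univ_of_univ_subset
    calc Set.univ = closure (⋃ j, Set.range (J j)) := hdense.symm
      _ ⊆ closure (closure (D₀.domain : Set Hlim)) := closure_mono hsub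
      _ = closure (D₀.domain : Set Hlim) := closure_closure
  -- symmetry
  have hsym : ∀ x y : D₀.domain, ⟪D₀ x, (y : Hlim)⟫_ℂ = ⟪(x : Hlim), D₀ y⟫_ℂ := by
    intro x y
    have hx : ((x : Hlim), D₀ x) ∈ G := hgraph ▸ D₀.mem_graph x
    have hy : ((y : Hlim), D₀ y) ∈ G := hgraph ▸ D₀.mem_graph y
    obtain ⟨j, hj⟩ := (hmemG _).mp hx
    obtain ⟨k, hk⟩ := (hmemG _).mp hy
    have hjl := hmono (le_max_left j k) hj
    have hkl := hmono (le_max_right j k) hk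
    set l := max j k
    rw [hGj_mem] at hjl hkl
    obtain ⟨p, hp, hpx⟩ := hjl
    obtain ⟨q, hq, hqy⟩ := hkl
    have h1 : D₀ x = J l p.2 := congrArg Prod.snd hpx.symm
    have h2 : (x : Hlim) = J l p.1 := congrArg Prod.fst hpx.symm
    have h3 : D₀ y = J l q.2 := congrArg Prod.snd hqy.symm
    have h4 : (y : Hlim) = J l q.1 := congrArg Prod.fst hqy.symm
    rw [h1, h2, h3, h4, LinearIsometry.inner_map_map, LinearIsometry.inner_map_map]
    exact aux_graph_symm (aux_sa_symm (hDsa l)) p hp q hq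
  -- closability
  have hclosable : D₀.IsClosable := aux_closable hdomdense hsym
  -- dense ranges of D₀ ± i
  have hrange : ∀ c : ℂ, c.re = 0 → ‖c‖ = 1 →
      Dense {y : Hlim | ∃ u : D₀.domain, D₀ u + c • (u : Hlim) = y} := by
    intro c hc hc1
    refine hdense.mono ?_
    rintro x hx
    rw [Set.mem_iUnion] at hx
    obtain ⟨j, η, rfl⟩ := hx
    obtain ⟨ξ, hξ⟩ := aux_sa_surj (hDsa j) hc hc1 η
    have hm : J j (ξ : H j) ∈ D₀.domain := by
      rw [← SetLike.mem_coe, hdom]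
      exact Set.mem_iUnion.mpr ⟨j, (ξ : H j), ξ.2, rfl⟩
    refine ⟨⟨J j (ξ : H j), hm⟩, ?_⟩
    rw [haction j ξ hm]
    calc J j ((D j) ξ) + c • J j (ξ : H j) = J j ((D j) ξ + c • (ξ : H j)) := by
          rw [_root_.map_add, _root_.map_smul]
      _ = J j η := by rw [hξ]
  exact ⟨D₀, hdom, haction, hdomdense, hsym, hclosable,
    aux_esa hdomdense hsym hclosable (hrange Complex.I Complex.I_re (by simp))
      (hrange (-Complex.I) (by simp) (by simp))⟩
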